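/- For every natural number n, the symmetric group S_n is an RCC-group: every automorphism α of S_n has a regular cycle, i.e., some permutation τ ∈ S_n has cycle length under α equal to the order of α. In particular, every finite group embeds into a finite RCC-group. -/

import Mathlib

open Finset

lemma sum_nat_ge (u : Finset ℕ) : u.card * u.card ≤ 2 * (∑ x ∈ u, x) + u.card := by
  induction u using Finset.induction_on_max with
  | empty => simp
  | insert a s ha ih =>
    have hs : s ⊆ Finset.range a := fun x hx => Finset.mem_range.2 (ha x hx)
    have hcard : s.card ≤ a := by simpa using Finset.card_le_card hs
    have hnotmem : a ∉ s := fun h => lt_irrefl a (ha a h)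
    rw [Finset.sum_insert hnotmem, Finset.card_insert_of_notMem hnotmem]
    nlinarith [ih]

lemma sum_nat_pos_ge (u : Finset ℕ) (h : ∀ x ∈ u, 1 ≤ x) :
    u.card * u.card + u.card ≤ 2 * ∑ x ∈ u, x := by
  classical
  have hinj : Set.InjOn (fun x => x - 1) u := by
    intro x hx y hy hxy
    have := h x hx; have := h y hy
    simp only at hxy; omega
  have hcard : (u.image (fun x => x - 1)).card = u.card := Finset.card_image_of_injOn hinj
  have hsum : ∑ x ∈ u, x = (∑ y ∈ u.image (fun x => x - 1), y) + u.card := by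
    rw [Finset.sum_image (fun x hx y hy => hinj hx hy)]
    calc ∑ x ∈ u, x = ∑ x ∈ u, ((x - 1) + 1) :=
          Finset.sum_congr rfl (fun x hx => by have := h x hx; omega)
      _ = (∑ x ∈ u, (x - 1)) + ∑ _x ∈ u, 1 := Finset.sum_add_distrib
      _ = (∑ x ∈ u, (x - 1)) + u.card := by rw [Finset.sum_const, smul_eq_mul, mul_one]
  have := sum_nat_ge (u.image (fun x => x - 1))
  rw [hcard] at this
  omega

lemma sum_distinct_primes_ge {s : Finset ℕ} (hp : ∀ p ∈ s, Nat.Prime p) (hne : s.Nonempty) :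
    s.card ^ 2 + 1 ≤ ∑ x ∈ s, x := by
  classical
  have htodd : ∀ x ∈ s.erase 2, x % 2 = 1 ∧ 3 ≤ x := by
    intro x hx
    have hx2 : x ≠ 2 := Finset.ne_of_mem_erase hx
    have hxp : Nat.Prime x := hp x (Finset.mem_of_mem_erase hx)
    have hodd := hxp.odd_of_ne_two hx2
    rw [Nat.odd_iff] at hodd
    have := hxp.two_le
    exact ⟨hodd, by omega⟩
  have hinj : Set.InjOn (fun x => x / 2) (s.erase 2) := by
    intro x hx y hy hxy
    have := htodd x hx; have := htodd y hy
    simp only at hxy; omega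
  have hcardw : ((s.erase 2).image (fun x => x / 2)).card = (s.erase 2).card :=
    Finset.card_image_of_injOn hinj
  have hwpos : ∀ y ∈ (s.erase 2).image (fun x => x / 2), 1 ≤ y := by
    intro y hy
    obtain ⟨x, hx, rfl⟩ := Finset.mem_image.1 hy
    have := htodd x hx; omega
  have hsumt : ∑ x ∈ s.erase 2, x
      = 2 * (∑ y ∈ (s.erase 2).image (fun x => x / 2), y) + (s.erase 2).card := by
    rw [Finset.sum_image (fun x hx y hy => hinj hx hy), Finset.mul_sum]
    calc ∑ x ∈ s.erase 2, x = ∑ x ∈ s.erase 2, (2 * (x / 2) + 1) :=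
          Finset.sum_congr rfl (fun x hx => by have := htodd x hx; omega)
      _ = (∑ x ∈ s.erase 2, 2 * (x / 2)) + ∑ _x ∈ s.erase 2, 1 := Finset.sum_add_distrib
      _ = _ := by rw [Finset.sum_const, smul_eq_mul, mul_one]
  have hkey := sum_nat_pos_ge ((s.erase 2).image (fun x => x / 2)) hwpos
  rw [hcardw] at hkey
  by_cases h2mem : 2 ∈ s
  · have hsplit : ∑ x ∈ s, x = 2 + ∑ x ∈ s.erase 2, x := (Finset.add_sum_erase _ _ h2mem).symm
    have hcardt : (s.erase 2).card + 1 = s.card := by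
      rw [Finset.card_erase_of_mem h2mem]
      have : 1 ≤ s.card := Finset.card_pos.2 hne
      omega
    rw [hsplit, hsumt, pow_two, ← hcardt]
    nlinarith
  · have hts : s.erase 2 = s := Finset.erase_eq_of_notMem h2mem
    have hcpos : 1 ≤ s.card := Finset.card_pos.2 hne
    rw [hts] at hsumt hkey
    rw [hsumt, pow_two]
    omega

lemma sum_le_prod_of_two_le {s : Finset ℕ} (h : ∀ x ∈ s, 2 ≤ x) :
    ∑ x ∈ s, x ≤ ∏ x ∈ s, x := by
  classical
  induction s using Finset.induction_on with
  | empty => simp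
  | @insert a s hx ih =>
    rw [Finset.sum_insert hx, Finset.prod_insert hx]
    have ha : 2 ≤ a := h a (Finset.mem_insert_self a s)
    have hs : ∀ x ∈ s, 2 ≤ x := fun x hxx => h x (Finset.mem_insert_of_mem hxx)
    have ihs := ih hs
    rcases Finset.eq_empty_or_nonempty s with rfl | hne
    · simp
    · obtain ⟨b, hb⟩ := hne
      have hble : b ≤ ∏ x ∈ s, x :=
        Finset.single_le_prod' (fun i hi => Nat.one_le_of_lt (hs i hi)) hb
      have h2b : 2 ≤ b := hs b hb
      nlinarith

lemma sum_primeFactors_le_self {a : ℕ} (ha : 1 ≤ a) : ∑ p ∈ a.primeFactors, p ≤ a := by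
  rcases Nat.eq_or_lt_of_le ha with h1 | h2
  · simp [← h1]
  · calc ∑ p ∈ a.primeFactors, p ≤ ∏ p ∈ a.primeFactors, p :=
        sum_le_prod_of_two_le (fun x hx => (Nat.prime_of_mem_primeFactors hx).two_le)
    _ ≤ a := Nat.le_of_dvd (by omega) (Nat.prod_primeFactors_dvd a)

lemma sum_union_le' (s t : Finset ℕ) (f : ℕ → ℕ) :
    ∑ x ∈ s ∪ t, f x ≤ (∑ x ∈ s, f x) + ∑ x ∈ t, f x := by
  classical
  rw [← Finset.union_sdiff_self_eq_union, Finset.sum_union Finset.sdiff_disjoint.symm]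
  exact Nat.add_le_add_left (Finset.sum_le_sum_of_subset (Finset.sdiff_subset)) _

lemma multiset_lcm_pos {M : Multiset ℕ} (h : ∀ x ∈ M, 0 < x) : 0 < M.lcm := by
  induction M using Multiset.induction_on with
  | empty => simp
  | @cons a M ih =>
    rw [Multiset.lcm_cons]
    have ha : 0 < a := h a (Multiset.mem_cons_self a M)
    have hM : 0 < M.lcm := ih (fun x hx => h x (Multiset.mem_cons_of_mem hx))
    exact Nat.pos_of_ne_zero (Nat.lcm_ne_zero (by omega) (by omega))

lemma sum_primeFactors_lcm_le {M : Multiset ℕ} (h : ∀ x ∈ M, 0 < x) :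
    ∑ p ∈ M.lcm.primeFactors, p ≤ M.sum := by
  induction M using Multiset.induction_on with
  | empty => simp
  | @cons a M ih =>
    rw [Multiset.lcm_cons, Multiset.sum_cons]
    have ha : 0 < a := h a (Multiset.mem_cons_self a M)
    have hM : ∀ x ∈ M, 0 < x := fun x hx => h x (Multiset.mem_cons_of_mem hx)
    have hMlcm : 0 < M.lcm := multiset_lcm_pos hM
    have hsub : (Nat.lcm a M.lcm).primeFactors ⊆ a.primeFactors ∪ M.lcm.primeFactors := by
      intro p hp
      have hpp : Nat.Prime p := Nat.prime_of_mem_primeFactors hp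
      have hpd : p ∣ Nat.lcm a M.lcm := Nat.dvd_of_mem_primeFactors hp
      have : p ∣ a * M.lcm := hpd.trans (Nat.lcm_dvd (Dvd.intro _ rfl) (Dvd.intro_left _ rfl))
      rcases hpp.dvd_mul.1 this with h' | h'
      · exact Finset.mem_union_left _ (Nat.mem_primeFactors.2 ⟨hpp, h', by omega⟩)
      · exact Finset.mem_union_right _ (Nat.mem_primeFactors.2 ⟨hpp, h', by omega⟩)
    calc ∑ p ∈ (Nat.lcm a M.lcm).primeFactors, p
        ≤ ∑ p ∈ a.primeFactors ∪ M.lcm.primeFactors, p := Finset.sum_le_sum_of_subset hsub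
      _ ≤ (∑ p ∈ a.primeFactors, p) + ∑ p ∈ M.lcm.primeFactors, p := sum_union_le' _ _ _
      _ ≤ a + M.sum := Nat.add_le_add (sum_primeFactors_le_self ha) (ih hM)

/-- sum of distinct primes dividing the order of a permutation is at most the size of the set -/
lemma sum_primeFactors_orderOf_perm_le {Y : Type*} [Fintype Y] [DecidableEq Y]
    (π : Equiv.Perm Y) : ∑ p ∈ (orderOf π).primeFactors, p ≤ Fintype.card Y := by
  have h1 : π.cycleType.lcm = orderOf π := Equiv.Perm.lcm_cycleType π
  have h2 : π.cycleType.sum = π.support.card := Equiv.Perm.sum_cycleType π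
  calc ∑ p ∈ (orderOf π).primeFactors, p = ∑ p ∈ π.cycleType.lcm.primeFactors, p := by rw [h1]
    _ ≤ π.cycleType.sum :=
        sum_primeFactors_lcm_le (fun x hx => by
          have := Equiv.Perm.two_le_of_mem_cycleType hx; omega)
    _ = π.support.card := h2
    _ ≤ Fintype.card Y := Finset.card_le_univ _


open Equiv Equiv.Perm

section PermRestrict

/-- Restrict a permutation-valued hom to an invariant subtype. -/
def permRestrict {A Y : Type*} [Group A] (Θ : A →* Equiv.Perm Y) (P : Y → Prop)
    (h : ∀ (a : A) (y : Y), P y → P (Θ a y)) : A →* Equiv.Perm {y // P y} where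
  toFun a := (Θ a).subtypePerm (fun y => ⟨fun hy => by
    have h2 := h a⁻¹ (Θ a y) hy
    rw [map_inv] at h2
    simpa using h2, fun hy => h a y hy⟩)
  map_one' := by
    ext y
    simp [Equiv.Perm.subtypePerm_apply]
  map_mul' a b := by
    ext y
    simp [Equiv.Perm.subtypePerm_apply]
    rfl

@[simp] lemma permRestrict_apply {A Y : Type*} [Group A] (Θ : A →* Equiv.Perm Y) (P : Y → Prop)
    (h : ∀ (a : A) (y : Y), P y → P (Θ a y)) (a : A) (y : {y // P y}) :
    (permRestrict Θ P h a y : Y) = Θ a y := rfl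

end PermRestrict

section TwoSubgroups

lemma exists_not_mem_pair {G : Type*} [Group G] {A B : Subgroup G}
    (hA : A ≠ ⊤) (hB : B ≠ ⊤) : ∃ g : G, g ∉ A ∧ g ∉ B := by
  have hA' : ∃ x, x ∉ A := by
    by_contra h
    push_neg at h
    exact hA ((Subgroup.eq_top_iff' A).2 h)
  have hB' : ∃ y, y ∉ B := by
    by_contra h
    push_neg at h
    exact hB ((Subgroup.eq_top_iff' B).2 h)
  obtain ⟨x, hx⟩ := hA'
  obtain ⟨y, hy⟩ := hB'
  by_cases hxB : x ∉ B
  · exact ⟨x, hx, hxB⟩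
  by_cases hyA : y ∉ A
  · exact ⟨y, hyA, hy⟩
  push_neg at hxB hyA
  refine ⟨x * y, fun h => hx ?_, fun h => hy ?_⟩
  · have : (x * y) * y⁻¹ ∈ A := A.mul_mem h (A.inv_mem hyA)
    simpa using this
  · have : x⁻¹ * (x * y) ∈ B := B.mul_mem (B.inv_mem hxB) h
    simpa [mul_assoc] using this

end TwoSubgroups

section FixSubgroup

variable {G : Type*} [Group G]

/-- fixed points of an automorphism, as a subgroup -/
def fixSubgroup (β : MulAut G) : Subgroup G where
  carrier := {g | β g = g}
  one_mem' := map_one β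
  mul_mem' := by
    intro a b ha hb
    simp only [Set.mem_setOf_eq] at *
    rw [map_mul, ha, hb]
  inv_mem' := by
    intro a ha
    simp only [Set.mem_setOf_eq] at *
    rw [map_inv, ha]

@[simp] lemma mem_fixSubgroup_iff (β : MulAut G) (g : G) : g ∈ fixSubgroup β ↔ β g = g :=
  Iff.rfl

lemma fixSubgroup_ne_top {β : MulAut G} (hβ : β ≠ 1) : fixSubgroup β ≠ ⊤ := by
  intro h
  apply hβ
  ext g
  exact (Subgroup.eq_top_iff' _).1 h g

end FixSubgroup

section Centralizer

lemma exists_two_fresh {n : ℕ} (h4 : 4 ≤ n) (i j : Fin n) :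
    ∃ k l : Fin n, k ≠ l ∧ k ≠ i ∧ k ≠ j ∧ l ≠ i ∧ l ≠ j := by
  classical
  have hcard : 1 < (Finset.univ \ {i, j} : Finset (Fin n)).card := by
    have h1 : ({i, j} : Finset (Fin n)).card ≤ 2 := Finset.card_insert_le _ _ |>.trans (by simp)
    have h2 : (Finset.univ \ {i, j} : Finset (Fin n)).card
        ≥ Finset.univ.card - ({i, j} : Finset (Fin n)).card := Finset.le_card_sdiff _ _
    simp only [Finset.card_univ, Fintype.card_fin] at h2
    omega
  obtain ⟨k, hk, l, hl, hkl⟩ := Finset.one_lt_card.1 hcard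
  simp only [Finset.mem_sdiff, Finset.mem_univ, Finset.mem_insert, Finset.mem_singleton,
    true_and, not_or] at hk hl
  exact ⟨k, l, hkl, hk.1, hk.2, hl.1, hl.2⟩

/-- anything commuting with all 3-cycles is trivial (n ≥ 4) -/
lemma eq_one_of_commute_threeCycles {n : ℕ} (h4 : 4 ≤ n) (c : Equiv.Perm (Fin n))
    (hc : ∀ θ : Equiv.Perm (Fin n), θ.IsThreeCycle → c * θ = θ * c) : c = 1 := by
  by_contra hne
  have : ∃ i, c i ≠ i := by
    by_contra h
    push_neg at h
    exact hne (Equiv.ext h)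
  obtain ⟨i, hi⟩ := this
  obtain ⟨k, l, hkl, hki, hkj, hli, hlj⟩ := exists_two_fresh h4 i (c i)
  have hθ : (Equiv.swap i l * Equiv.swap i k).IsThreeCycle :=
    Equiv.Perm.isThreeCycle_swap_mul_swap_same (Ne.symm hli) (Ne.symm hki) (fun h => hkl h.symm)
  have hcomm := hc _ hθ
  have happ : (c * (Equiv.swap i l * Equiv.swap i k)) i
      = ((Equiv.swap i l * Equiv.swap i k) * c) i := by rw [hcomm]
  simp only [Equiv.Perm.mul_apply] at happ
  rw [Equiv.swap_apply_left] at happ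
  rw [Equiv.swap_apply_of_ne_of_ne hki hkl] at happ
  -- LHS = c k ; RHS = swap i l (swap i k (c i)) = c i (as c i ∉ {i,k,l})
  rw [Equiv.swap_apply_of_ne_of_ne (fun h => hi h) (Ne.symm hkj)] at happ
  rw [Equiv.swap_apply_of_ne_of_ne (fun h => hi h) (Ne.symm hlj)] at happ
  exact hki (c.injective happ)

/-- an automorphism of a symmetric group fixing all transpositions is trivial -/
lemma mulAut_eq_one_of_fixes_swaps {n : ℕ} {β : MulAut (Equiv.Perm (Fin n))}
    (h : ∀ s : Equiv.Perm (Fin n), s.IsSwap → β s = s) : β = 1 := by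
  classical
  have key : ∀ g ∈ Subgroup.closure {σ : Equiv.Perm (Fin n) | σ.IsSwap}, β g = g := by
    intro g hg
    induction hg using Subgroup.closure_induction with
    | mem x hx => exact h x hx
    | one => exact map_one β
    | mul x y hx hy ihx ihy => rw [map_mul, ihx, ihy]
    | inv x hx ihx => rw [map_inv, ihx]
  have : ∀ g : Equiv.Perm (Fin n), β g = g := by
    intro g
    apply key
    rw [Equiv.Perm.closure_isSwap]
    trivial
  exact DFunLike.ext _ _ fun g => by simpa using this g


open Equiv Equiv.Perm


section NormalThree

variable {n : ℕ}

lemma exists_fresh_of_card (s : Finset (Fin n)) (hs : s.card + 1 ≤ n) :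
    ∃ x : Fin n, x ∉ s := by
  by_contra h
  push_neg at h
  have : (Finset.univ : Finset (Fin n)) ⊆ s := fun x _ => h x
  have := Finset.card_le_card this
  simp [Finset.card_univ] at this
  omega

lemma swap_disjoint_swap {a b j k : Fin n} (haj : a ≠ j) (hak : a ≠ k) (hbj : b ≠ j)
    (hbk : b ≠ k) : (Equiv.swap a b).Disjoint (Equiv.swap j k) := by
  intro x
  by_cases hx : x = a ∨ x = b
  · right
    rcases hx with rfl | rfl
    · exact Equiv.swap_apply_of_ne_of_ne haj hak
    · exact Equiv.swap_apply_of_ne_of_ne hbj hbk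
  · push_neg at hx
    left
    exact Equiv.swap_apply_of_ne_of_ne hx.1 hx.2

/-- Any nontrivial normal subgroup of `S_n`, `n ≥ 5`, contains every 3-cycle. -/
lemma normal_contains_threeCycles (h5 : 5 ≤ n) (N : Subgroup (Equiv.Perm (Fin n)))
    (hN : N.Normal) (hbot : N ≠ ⊥) : ∀ θ : Equiv.Perm (Fin n), θ.IsThreeCycle → θ ∈ N := by
  classical
  -- First: find a 3-cycle in N.
  have key : ∃ θ0 : Equiv.Perm (Fin n), θ0.IsThreeCycle ∧ θ0 ∈ N := by
    obtain ⟨⟨σ, hσN⟩, hσ1⟩ := Subgroup.ne_bot_iff_exists_ne_one.1 hbot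
    have hσne : σ ≠ 1 := by simpa [Subtype.ext_iff] using hσ1
    have : ∃ i, σ i ≠ i := by
      by_contra h
      push_neg at h
      exact hσne (Equiv.ext h)
    obtain ⟨i, hi⟩ := this
    set j := σ i with hj
    have hij : i ≠ j := fun h => hi h.symm
    -- pick k ∉ {i, j}
    obtain ⟨k, hk⟩ := exists_fresh_of_card ({i, j} : Finset (Fin n))
      (by
        have : ({i, j} : Finset (Fin n)).card ≤ 2 := (Finset.card_insert_le _ _).trans (by simp)
        omega)
    simp only [Finset.mem_insert, Finset.mem_singleton, not_or] at hk
    obtain ⟨hki, hkj⟩ := hk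
    -- the commutator c = σ (swap j k) σ⁻¹ (swap j k)⁻¹ ∈ N
    have hconjmem : σ * Equiv.swap j k * σ⁻¹ * (Equiv.swap j k)⁻¹ ∈ N := by
      have h1 : Equiv.swap j k * σ⁻¹ * (Equiv.swap j k)⁻¹ ∈ N :=
        hN.conj_mem σ⁻¹ (N.inv_mem hσN) (Equiv.swap j k)
      have := N.mul_mem hσN h1
      simpa [mul_assoc] using this
    have hc : σ * Equiv.swap j k * σ⁻¹ * (Equiv.swap j k)⁻¹
        = Equiv.swap (σ j) (σ k) * Equiv.swap j k := by
      rw [Equiv.swap_apply_apply σ j k]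
      simp [Equiv.swap_inv, mul_assoc]
    set a := σ j with haeq
    set b := σ k with hbeq
    have haj : a ≠ j := by
      intro h
      exact hij (σ.injective (by rw [← hj, ← haeq, h]))
    have hbj : b ≠ j := by
      intro h
      have hki' : σ k = σ i := by rw [← hbeq, h]
      exact hki (σ.injective hki')
    have hab : a ≠ b := fun h => hkj (σ.injective h).symm
    have hjk : j ≠ k := fun h => hkj h.symm
    rw [hc] at hconjmem
    -- case analysis
    by_cases hak : a = k
    · -- 3-cycle: swap k b * swap j k = swap k b * swap k j
      refine ⟨_, ?_, hconjmem⟩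
      rw [hak]
      rw [show Equiv.swap j k = Equiv.swap k j from Equiv.swap_comm j k]
      have hkb : k ≠ b := hak ▸ hab
      exact isThreeCycle_swap_mul_swap_same hkb hkj hbj
    by_cases hbk : b = k
    · refine ⟨_, ?_, hconjmem⟩
      rw [hbk]
      rw [show Equiv.swap a k = Equiv.swap k a from Equiv.swap_comm a k,
        show Equiv.swap j k = Equiv.swap k j from Equiv.swap_comm j k]
      exact isThreeCycle_swap_mul_swap_same (fun h => hak h.symm) hkj haj
    · -- double transposition case; pick e ∉ {a,b,j,k}
      obtain ⟨e, he⟩ := exists_fresh_of_card ({a, b, j, k} : Finset (Fin n))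
        (by
          have : ({a, b, j, k} : Finset (Fin n)).card ≤ 4 := by
            refine (Finset.card_insert_le _ _).trans ?_
            refine Nat.succ_le_succ ?_
            refine (Finset.card_insert_le _ _).trans ?_
            refine Nat.succ_le_succ ?_
            exact (Finset.card_insert_le _ _).trans (by simp)
          omega)
      simp only [Finset.mem_insert, Finset.mem_singleton, not_or] at he
      obtain ⟨hea, heb, hej, hek⟩ := he
      -- conjugate by swap k e
      have hmem2 : (Equiv.swap k e) * (Equiv.swap a b * Equiv.swap j k) * (Equiv.swap k e)⁻¹ ∈ N :=
        hN.conj_mem _ hconjmem _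
      have hcalc : (Equiv.swap k e) * (Equiv.swap a b * Equiv.swap j k) * (Equiv.swap k e)⁻¹
          = Equiv.swap a b * Equiv.swap j e := by
        have h1 : Equiv.swap ((Equiv.swap k e) a) ((Equiv.swap k e) b)
            = (Equiv.swap k e) * Equiv.swap a b * (Equiv.swap k e)⁻¹ :=
          Equiv.swap_apply_apply _ a b
        have h2 : Equiv.swap ((Equiv.swap k e) j) ((Equiv.swap k e) k)
            = (Equiv.swap k e) * Equiv.swap j k * (Equiv.swap k e)⁻¹ :=
          Equiv.swap_apply_apply _ j k
        rw [Equiv.swap_apply_of_ne_of_ne hak (fun h => hea h.symm),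
          Equiv.swap_apply_of_ne_of_ne hbk (fun h => heb h.symm)] at h1
        rw [Equiv.swap_apply_of_ne_of_ne hjk (fun h => hej h.symm), Equiv.swap_apply_left] at h2
        calc Equiv.swap k e * (Equiv.swap a b * Equiv.swap j k) * (Equiv.swap k e)⁻¹
            = (Equiv.swap k e * Equiv.swap a b * (Equiv.swap k e)⁻¹)
              * (Equiv.swap k e * Equiv.swap j k * (Equiv.swap k e)⁻¹) := by group
          _ = Equiv.swap a b * Equiv.swap j e := by rw [← h1, ← h2]
      rw [hcalc] at hmem2
      -- product: (swap a b * swap j k) * (swap a b * swap j e) = swap j k * swap j e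
      have hprod : (Equiv.swap a b * Equiv.swap j k) * (Equiv.swap a b * Equiv.swap j e)
          = Equiv.swap j k * Equiv.swap j e := by
        have hd1 : (Equiv.swap a b).Disjoint (Equiv.swap j k) :=
          swap_disjoint_swap haj hak hbj hbk
        have hcomm := hd1.commute.eq
        calc Equiv.swap a b * Equiv.swap j k * (Equiv.swap a b * Equiv.swap j e)
            = Equiv.swap a b * (Equiv.swap j k * Equiv.swap a b) * Equiv.swap j e := by
              group
          _ = Equiv.swap a b * (Equiv.swap a b * Equiv.swap j k) * Equiv.swap j e := by
              rw [← hcomm]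
          _ = (Equiv.swap a b * Equiv.swap a b) * (Equiv.swap j k * Equiv.swap j e) := by
              group
          _ = Equiv.swap j k * Equiv.swap j e := by
              rw [Equiv.swap_mul_self, one_mul]
      have hmem3 : Equiv.swap j k * Equiv.swap j e ∈ N := by
        rw [← hprod]
        exact N.mul_mem hconjmem hmem2
      exact ⟨_, isThreeCycle_swap_mul_swap_same hjk (fun h => hej h.symm) (fun h => hek h.symm),
        hmem3⟩
  -- Now: any 3-cycle is conjugate to θ0.
  obtain ⟨θ0, hθ0, hθ0N⟩ := key
  intro θ hθ
  have hconj : IsConj θ0 θ := by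
    rw [Equiv.Perm.isConj_iff_cycleType_eq, hθ0.cycleType, hθ.cycleType]
  obtain ⟨u, hu⟩ := isConj_iff.1 hconj
  rw [← hu]
  exact hN.conj_mem θ0 hθ0N u

section IndexLemma

open Equiv Equiv.Perm

variable {n : ℕ}

lemma fix_normalCore_eq_bot (h5 : 5 ≤ n) {β : MulAut (Equiv.Perm (Fin n))} (hβ : β ≠ 1) :
    (fixSubgroup β).normalCore = ⊥ := by
  by_contra hne
  have hall3 := normal_contains_threeCycles h5 _ (Subgroup.normalCore_normal _) hne
  -- β fixes all three cycles
  have hfix3 : ∀ θ : Equiv.Perm (Fin n), θ.IsThreeCycle → β θ = θ := by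
    intro θ hθ
    exact (Subgroup.normalCore_le (fixSubgroup β)) (hall3 θ hθ)
  -- β fixes all swaps
  have hfixswap : ∀ s : Equiv.Perm (Fin n), s.IsSwap → β s = s := by
    intro s hs
    have hcomm : ∀ θ : Equiv.Perm (Fin n), θ.IsThreeCycle → (s⁻¹ * β s) * θ = θ * (s⁻¹ * β s) := by
      intro θ hθ
      have hconj3 : (s * θ * s⁻¹).IsThreeCycle := by
        unfold Equiv.Perm.IsThreeCycle
        rw [Equiv.Perm.cycleType_conj]
        exact hθ.cycleType
      have h1 : β (s * θ * s⁻¹) = s * θ * s⁻¹ := hfix3 _ hconj3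
      rw [map_mul, map_mul, hfix3 θ hθ, map_inv] at h1
      -- h1 : β s * θ * (β s)⁻¹ = s * θ * s⁻¹
      have h2 : (s⁻¹ * β s) * θ * (β s)⁻¹ * s = θ := by
        rw [mul_assoc s⁻¹ (β s) θ]
        calc s⁻¹ * (β s * θ) * (β s)⁻¹ * s = s⁻¹ * (β s * θ * (β s)⁻¹) * s := by group
          _ = s⁻¹ * (s * θ * s⁻¹) * s := by rw [mul_assoc (β s) θ, ← mul_assoc (β s) θ, h1]
          _ = θ := by group
      calc (s⁻¹ * β s) * θ = ((s⁻¹ * β s) * θ * (β s)⁻¹ * s) * (s⁻¹ * (β s)) := by group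
        _ = θ * (s⁻¹ * β s) := by rw [h2]
    have := eq_one_of_commute_threeCycles (by omega) _ hcomm
    have h3 : s * (s⁻¹ * β s) = s * 1 := by rw [this]
    rw [mul_one, ← mul_assoc, mul_inv_cancel, one_mul] at h3
    exact h3
  exact hβ (mulAut_eq_one_of_fixes_swaps hfixswap)

lemma index_fixSubgroup_ge (h5 : 5 ≤ n) {β : MulAut (Equiv.Perm (Fin n))} (hβ : β ≠ 1) :
    n ≤ (fixSubgroup β).index := by
  classical
  set F := fixSubgroup β with hF
  have hcore : F.normalCore = ⊥ := fix_normalCore_eq_bot h5 hβ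
  have hker : (MulAction.toPermHom (Equiv.Perm (Fin n)) (Equiv.Perm (Fin n) ⧸ F)).ker = ⊥ := by
    rw [← Subgroup.normalCore_eq_ker, hcore]
  have hinj := (MonoidHom.ker_eq_bot_iff _).1 hker
  have hcardle : Nat.card (Equiv.Perm (Fin n))
      ≤ Nat.card (Equiv.Perm (Equiv.Perm (Fin n) ⧸ F)) :=
    Nat.card_le_card_of_injective _ hinj
  have hc1 : Nat.card (Equiv.Perm (Fin n)) = Nat.factorial n := by
    rw [Nat.card_eq_fintype_card, Fintype.card_perm, Fintype.card_fin]
  letI : Fintype (Equiv.Perm (Fin n) ⧸ F) := Fintype.ofFinite _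
  have hc2 : Nat.card (Equiv.Perm (Equiv.Perm (Fin n) ⧸ F)) = Nat.factorial F.index := by
    rw [Nat.card_eq_fintype_card, Fintype.card_perm, ← Nat.card_eq_fintype_card,
      ← Subgroup.index_eq_card]
  rw [hc1, hc2] at hcardle
  by_contra hlt
  push_neg at hlt
  have hipos : 0 < F.index := Nat.pos_of_ne_zero (Subgroup.index_ne_zero_of_finite)
  have : Nat.factorial F.index < Nat.factorial n := (Nat.factorial_lt hipos).2 hlt
  omega

end IndexLemma
section ConjClassesMachinery

open Equiv Equiv.Perm

variable {G : Type*} [Group G]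

instance mulAutFinite [Finite G] : Finite (MulAut G) :=
  Finite.of_injective (fun (α : MulAut G) => (α : G → G)) (fun _ _ h => DFunLike.coe_injective h)

/-- The action of `MulAut G` on conjugacy classes. -/
def conjClassesHom : MulAut G →* Equiv.Perm (ConjClasses G) where
  toFun α :=
    { toFun := ConjClasses.map α.toMonoidHom
      invFun := ConjClasses.map α.symm.toMonoidHom
      left_inv := by
        intro c
        obtain ⟨a, rfl⟩ := ConjClasses.exists_rep c
        show ConjClasses.mk (α.symm (α a)) = ConjClasses.mk a
        rw [MulEquiv.symm_apply_apply]
      right_inv := by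
        intro c
        obtain ⟨a, rfl⟩ := ConjClasses.exists_rep c
        show ConjClasses.mk (α (α.symm a)) = ConjClasses.mk a
        rw [MulEquiv.apply_symm_apply] }
  map_one' := by
    ext c
    obtain ⟨a, rfl⟩ := ConjClasses.exists_rep c
    rfl
  map_mul' α β := by
    ext c
    obtain ⟨a, rfl⟩ := ConjClasses.exists_rep c
    rfl

@[simp] lemma conjClassesHom_mk (α : MulAut G) (a : G) :
    conjClassesHom α (ConjClasses.mk a) = ConjClasses.mk (α a) := rfl

/-- classes of involutions -/
def IsInvolClass (c : ConjClasses G) : Prop :=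
  ∃ g : G, c = ConjClasses.mk g ∧ g * g = 1 ∧ g ≠ 1

lemma isInvolClass_invariant (α : MulAut G) (c : ConjClasses G) (h : IsInvolClass c) :
    IsInvolClass (conjClassesHom α c) := by
  obtain ⟨g, rfl, hg2, hg1⟩ := h
  refine ⟨α g, rfl, ?_, ?_⟩
  · rw [← map_mul, hg2, map_one]
  · intro h
    apply hg1
    have := congrArg α.symm h
    rw [MulEquiv.symm_apply_apply, map_one] at this
    exact this

/-- action of automorphisms on involution classes -/
def psiHom (G : Type*) [Group G] : MulAut G →* Equiv.Perm {c : ConjClasses G // IsInvolClass c} :=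
  permRestrict conjClassesHom IsInvolClass isInvolClass_invariant

end ConjClassesMachinery

section SwapStuff

open Equiv Equiv.Perm

variable {n : ℕ}

lemma cycleType_isSwap {s : Equiv.Perm (Fin n)} (hs : s.IsSwap) : s.cycleType = {2} := by
  have hc : s.IsCycle := hs.isCycle
  rw [hc.cycleType, Equiv.Perm.card_support_eq_two.2 hs]

lemma isSwap_ne_one {s : Equiv.Perm (Fin n)} (hs : s.IsSwap) : s ≠ 1 := by
  obtain ⟨x, y, hxy, rfl⟩ := hs
  intro h
  have : Equiv.swap x y x = x := by rw [h]; rfl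
  rw [Equiv.swap_apply_left] at this
  exact hxy this.symm

lemma isInvolClass_mk_swap {s : Equiv.Perm (Fin n)} (hs : s.IsSwap) :
    IsInvolClass (ConjClasses.mk s) := by
  obtain ⟨x, y, hxy, rfl⟩ := hs
  exact ⟨Equiv.swap x y, rfl, Equiv.swap_mul_self x y, isSwap_ne_one ⟨x, y, hxy, rfl⟩⟩

/-- elements of the kernel of psiHom preserve swaps -/
lemma ker_psi_preserves_swaps {β : MulAut (Equiv.Perm (Fin n))}
    (hβ : psiHom (Equiv.Perm (Fin n)) β = 1) {s : Equiv.Perm (Fin n)} (hs : s.IsSwap) :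
    (β s).IsSwap := by
  classical
  have hx : psiHom (Equiv.Perm (Fin n)) β ⟨ConjClasses.mk s, isInvolClass_mk_swap hs⟩
      = ⟨ConjClasses.mk s, isInvolClass_mk_swap hs⟩ := by rw [hβ]; rfl
  have hmk : ConjClasses.mk (β s) = ConjClasses.mk s := by
    have := congrArg Subtype.val hx
    simpa [psiHom, permRestrict_apply] using this
  have hconj : IsConj (β s) s := ConjClasses.mk_eq_mk_iff_isConj.1 hmk
  have hct : (β s).cycleType = {2} := by
    rw [Equiv.Perm.isConj_iff_cycleType_eq.1 hconj, cycleType_isSwap hs]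
  have hsupp : (β s).support.card = 2 := by
    have := Equiv.Perm.sum_cycleType (β s)
    rw [hct] at this
    simpa using this.symm
  exact Equiv.Perm.card_support_eq_two.1 hsupp

/-- restriction of kernel elements to the set of transpositions -/
def phiHom (n : ℕ) : (psiHom (Equiv.Perm (Fin n))).ker →*
    Equiv.Perm {s : Equiv.Perm (Fin n) // s.IsSwap} :=
  permRestrict ((MulAut.toPerm (Equiv.Perm (Fin n))).comp
      (Subgroup.subtype (psiHom (Equiv.Perm (Fin n))).ker))
    Equiv.Perm.IsSwap
    (fun a y hy => ker_psi_preserves_swaps (MonoidHom.mem_ker.1 a.2) hy)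

lemma phiHom_injective (n : ℕ) : Function.Injective (phiHom n) := by
  rw [← MonoidHom.ker_eq_bot_iff]
  rw [Subgroup.eq_bot_iff_forall]
  intro a ha
  rw [MonoidHom.mem_ker] at ha
  have hfix : ∀ s : Equiv.Perm (Fin n), s.IsSwap → (a : MulAut (Equiv.Perm (Fin n))) s = s := by
    intro s hs
    have hx : phiHom n a ⟨s, hs⟩ = ⟨s, hs⟩ := by rw [ha]; rfl
    have := congrArg Subtype.val hx
    exact this
  have : (a : MulAut (Equiv.Perm (Fin n))) = 1 := mulAut_eq_one_of_fixes_swaps hfix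
  exact Subtype.ext this

/-- the set of swaps has at most n(n-1)/2 elements -/
lemma card_swaps_le : Nat.card {s : Equiv.Perm (Fin n) // s.IsSwap} ≤ n * (n - 1) / 2 := by
  classical
  have hinj : Function.Injective
      (fun s : {s : Equiv.Perm (Fin n) // s.IsSwap} =>
        (⟨(s : Equiv.Perm (Fin n)).support, by
          rw [Finset.mem_powersetCard]
          exact ⟨Finset.subset_univ _, Equiv.Perm.card_support_eq_two.2 s.2⟩⟩ :
          {t : Finset (Fin n) // t ∈ Finset.powersetCard 2 (Finset.univ : Finset (Fin n))})) := by
    intro s t h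
    simp only [Subtype.mk.injEq] at h
    obtain ⟨x, y, hxy, hsx⟩ := s.2
    obtain ⟨u, v, huv, htu⟩ := t.2
    have hsupps : (s : Equiv.Perm (Fin n)).support = {x, y} := by
      rw [hsx]; exact Equiv.Perm.support_swap hxy
    have hsuppt : (t : Equiv.Perm (Fin n)).support = {u, v} := by
      rw [htu]; exact Equiv.Perm.support_swap huv
    rw [hsupps, hsuppt] at h
    -- {x,y} = {u,v} as finsets implies swap x y = swap u v
    have hx : x ∈ ({u, v} : Finset (Fin n)) := by rw [← h]; simp
    have hy : y ∈ ({u, v} : Finset (Fin n)) := by rw [← h]; simp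
    simp only [Finset.mem_insert, Finset.mem_singleton] at hx hy
    apply Subtype.ext
    rw [hsx, htu]
    rcases hx with rfl | rfl
    · rcases hy with rfl | rfl
      · exact absurd rfl hxy
      · rfl
    · rcases hy with rfl | rfl
      · exact Equiv.swap_comm _ _
      · exact absurd rfl hxy
  have hle := Nat.card_le_card_of_injective _ hinj
  have hcard : Nat.card {t : Finset (Fin n) // t ∈ Finset.powersetCard 2 (Finset.univ : Finset (Fin n))}
      = n * (n - 1) / 2 := by
    rw [Nat.card_eq_fintype_card, Fintype.card_coe, Finset.card_powersetCard, Finset.card_univ,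
      Fintype.card_fin, Nat.choose_two_right]
  rw [hcard] at hle
  exact hle

end SwapStuff
section InvolutionClasses

open Equiv Equiv.Perm

variable {n : ℕ}

lemma invol_cycleType {g : Equiv.Perm (Fin n)} (h2 : g * g = 1) (h1 : g ≠ 1) :
    g.cycleType = Multiset.replicate (Multiset.card g.cycleType) 2 := by
  have hord : orderOf g = 2 := orderOf_eq_prime (by rw [pow_two]; exact h2) h1
  rw [Multiset.eq_replicate_card]
  intro b hb
  have hdvd : b ∣ 2 := by
    have := Multiset.dvd_lcm hb
    rwa [Equiv.Perm.lcm_cycleType, hord] at this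
  have h2b := Equiv.Perm.two_le_of_mem_cycleType hb
  have hble : b ≤ 2 := Nat.le_of_dvd (by norm_num) hdvd
  omega

lemma card_involClasses_le :
    Nat.card {c : ConjClasses (Equiv.Perm (Fin n)) // IsInvolClass c} ≤ n / 2 + 1 := by
  classical
  have hinj : Function.Injective
      (fun c : {c : ConjClasses (Equiv.Perm (Fin n)) // IsInvolClass c} =>
        (⟨Multiset.card (Classical.choose c.2).cycleType, by
          have hspec := Classical.choose_spec c.2
          obtain ⟨-, hg2, hg1⟩ := hspec
          have hct := invol_cycleType hg2 hg1
          have hsum := Equiv.Perm.sum_cycleType (Classical.choose c.2)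
          have h2r : 2 * Multiset.card (Classical.choose c.2).cycleType
              = (Classical.choose c.2).support.card := by
            rw [← hsum]
            conv_rhs => rw [hct]
            rw [Multiset.sum_replicate, smul_eq_mul, mul_comm]
          have hle : (Classical.choose c.2).support.card ≤ n := by
            have := Finset.card_le_univ (Classical.choose c.2).support
            simpa using this
          have : Multiset.card (Classical.choose c.2).cycleType ≤ n / 2 := by
            rw [Nat.le_div_iff_mul_le (by norm_num)]
            omega
          omega⟩ : Fin (n / 2 + 1))) := by
    intro c d h
    simp only [Fin.mk.injEq] at h
    have hcspec := Classical.choose_spec c.2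
    have hdspec := Classical.choose_spec d.2
    obtain ⟨hcc, hc2, hc1⟩ := hcspec
    obtain ⟨hdd, hd2, hd1⟩ := hdspec
    have hconj : IsConj (Classical.choose c.2) (Classical.choose d.2) := by
      rw [Equiv.Perm.isConj_iff_cycleType_eq, invol_cycleType hc2 hc1, invol_cycleType hd2 hd1, h]
    apply Subtype.ext
    rw [hcc, hdd]
    exact ConjClasses.mk_eq_mk_iff_isConj.2 hconj
  have := Nat.card_le_card_of_injective _ hinj
  simpa [Nat.card_eq_fintype_card] using this

/-- action of automorphisms on the set of involutions -/
def invHom (n : ℕ) : MulAut (Equiv.Perm (Fin n)) →*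
    Equiv.Perm {σ : Equiv.Perm (Fin n) // σ * σ = 1 ∧ σ ≠ 1} :=
  permRestrict (MulAut.toPerm (Equiv.Perm (Fin n))) (fun σ => σ * σ = 1 ∧ σ ≠ 1)
    (fun β σ hσ => by
      constructor
      · show β σ * β σ = 1
        rw [← map_mul, hσ.1, map_one]
      · intro h
        apply hσ.2
        have h' : β σ = 1 := h
        have := congrArg β.symm h'
        rwa [MulEquiv.symm_apply_apply, map_one] at this)

lemma invHom_injective (n : ℕ) : Function.Injective (invHom n) := by
  intro a b h
  have h1 : a * b⁻¹ = 1 → a = b := fun hh => by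
    have := congrArg (· * b) hh
    simpa [mul_assoc] using this
  apply h1
  have hker : invHom n (a * b⁻¹) = 1 := by rw [map_mul, map_inv, h, mul_inv_cancel]
  have hfix : ∀ s : Equiv.Perm (Fin n), s.IsSwap → (a * b⁻¹) s = s := by
    intro s hs
    have hmem : s * s = 1 ∧ s ≠ 1 := by
      obtain ⟨x, y, hxy, rfl⟩ := hs
      exact ⟨Equiv.swap_mul_self x y, isSwap_ne_one ⟨x, y, hxy, rfl⟩⟩
    have hx : invHom n (a * b⁻¹) ⟨s, hmem⟩ = ⟨s, hmem⟩ := by rw [hker]; rfl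
    have := congrArg Subtype.val hx
    exact this
  exact mulAut_eq_one_of_fixes_swaps hfix

end InvolutionClasses

section SumPrimes

open Equiv

lemma sum_primes_orderOf_le_natCard {Y : Type*} [Finite Y] (π : Equiv.Perm Y) :
    ∑ p ∈ (orderOf π).primeFactors, p ≤ Nat.card Y := by
  letI := Fintype.ofFinite Y
  letI := Classical.decEq Y
  rw [Nat.card_eq_fintype_card]
  exact sum_primeFactors_orderOf_perm_le π

lemma sum_primes_le_of_injective {A Y : Type*} [Group A] [Finite Y]
    (Θ : A →* Equiv.Perm Y) (hinj : Function.Injective Θ) (a : A) :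
    ∑ p ∈ (orderOf a).primeFactors, p ≤ Nat.card Y := by
  rw [← orderOf_injective Θ hinj a]
  exact sum_primes_orderOf_le_natCard (Θ a)

end SumPrimes
section Reduction

open Function

lemma mulAut_pow_apply {G : Type*} [Group G] (α : MulAut G) :
    ∀ (j : ℕ) (τ : G), (α ^ j) τ = (⇑α)^[j] τ := by
  intro j
  induction j with
  | zero => intro τ; rfl
  | succ j ih =>
    intro τ
    rw [pow_succ, Function.iterate_succ_apply]
    have : (α ^ j * α) τ = (α ^ j) (α τ) := rfl
    rw [this, ih]

lemma minimalPeriod_from_primes {G : Type*} [Group G] [Finite G] (α : MulAut G) (τ : G)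
    (h : ∀ p ∈ (orderOf α).primeFactors, (α ^ (orderOf α / p)) τ ≠ τ) :
    Function.minimalPeriod (⇑α) τ = orderOf α := by
  set m := orderOf α with hm
  have hmpos : 0 < m := orderOf_pos α
  have hper : Function.IsPeriodicPt (⇑α) m τ := by
    show (⇑α)^[m] τ = τ
    rw [← mulAut_pow_apply, pow_orderOf_eq_one]
    rfl
  have hd : Function.minimalPeriod (⇑α) τ ∣ m := Function.isPeriodicPt_iff_minimalPeriod_dvd.1 hper
  rcases eq_or_ne (Function.minimalPeriod (⇑α) τ) m with heq | hne
  · exact heq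
  exfalso
  set d := Function.minimalPeriod (⇑α) τ with hdd
  have hdlt : d < m := Nat.lt_of_le_of_ne (Nat.le_of_dvd hmpos hd) hne
  obtain ⟨c, hc⟩ := hd
  have hc2 : 2 ≤ c := by
    rcases Nat.lt_or_ge c 2 with h' | h'
    · interval_cases c <;> omega
    · exact h'
  obtain ⟨p, hp, hpc⟩ := Nat.exists_prime_and_dvd (n := c) (by omega)
  obtain ⟨e, he⟩ := hpc
  have hpm : p ∣ m := by rw [hc, he]; exact ⟨d * e, by ring⟩
  have hpmem : p ∈ m.primeFactors := Nat.mem_primeFactors.2 ⟨hp, hpm, by omega⟩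
  have hmp : m / p = d * e := by
    rw [hc, he, show d * (p * e) = p * (d * e) by ring]
    exact Nat.mul_div_cancel_left _ hp.pos
  have hdvd2 : d ∣ m / p := by rw [hmp]; exact ⟨e, rfl⟩
  have hper2 : Function.IsPeriodicPt (⇑α) (m / p) τ :=
    Function.isPeriodicPt_iff_minimalPeriod_dvd.2 hdvd2
  apply h p hpmem
  rw [mulAut_pow_apply]
  exact hper2

end Reduction

section Avoiding

lemma exists_avoiding_of_card_le_two {G : Type*} [Group G] (F : ℕ → Subgroup G) (S : Finset ℕ)
    (hproper : ∀ p ∈ S, F p ≠ ⊤) (hcard : S.card ≤ 2) : ∃ g : G, ∀ p ∈ S, g ∉ F p := by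
  classical
  match hS : S.card with
  | 0 =>
    rw [Finset.card_eq_zero] at hS
    exact ⟨1, by simp [hS]⟩
  | 1 =>
    rw [Finset.card_eq_one] at hS
    obtain ⟨p, rfl⟩ := hS
    have : ∃ x, x ∉ F p := by
      by_contra hcon
      push_neg at hcon
      exact hproper p (by simp) ((Subgroup.eq_top_iff' _).2 hcon)
    obtain ⟨x, hx⟩ := this
    exact ⟨x, by simpa using hx⟩
  | 2 =>
    rw [Finset.card_eq_two] at hS
    obtain ⟨p, q, hpq, rfl⟩ := hS
    obtain ⟨g, hg1, hg2⟩ := exists_not_mem_pair (hproper p (by simp)) (hproper q (by simp))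
    refine ⟨g, ?_⟩
    intro r hr
    simp only [Finset.mem_insert, Finset.mem_singleton] at hr
    rcases hr with rfl | rfl
    · exact hg1
    · exact hg2
  | (k+3) => omega

end Avoiding

section Covering

open Equiv

lemma covering_count {n : ℕ} (h5 : 5 ≤ n) (S : Finset ℕ)
    (F : ℕ → Subgroup (Equiv.Perm (Fin n)))
    (hidx : ∀ p ∈ S, n ≤ (F p).index)
    (hcover : ∀ τ : Equiv.Perm (Fin n), ∃ p ∈ S, τ ∈ F p) : n ≤ S.card := by
  classical
  by_contra hlt
  push_neg at hlt
  -- each subgroup has card * index = n!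
  have hcardF : ∀ p ∈ S, n * Nat.card (F p) ≤ n.factorial := by
    intro p hp
    have h1 := Subgroup.card_mul_index (F p)
    have h2 : Nat.card (Equiv.Perm (Fin n)) = n.factorial := by
      rw [Nat.card_eq_fintype_card, Fintype.card_perm, Fintype.card_fin]
    calc n * Nat.card (F p) ≤ (F p).index * Nat.card (F p) :=
          Nat.mul_le_mul_right _ (hidx p hp)
      _ = n.factorial := by rw [mul_comm, h1, h2]
  -- counting
  have hfilter : ∀ p, (Finset.univ.filter (· ∈ F p)).card = Nat.card (F p) := by
    intro p
    rw [Nat.card_eq_fintype_card]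
    rw [Fintype.card_subtype]
  have hsubset : (Finset.univ : Finset (Equiv.Perm (Fin n))).erase 1
      ⊆ S.biUnion (fun p => (Finset.univ.filter (· ∈ F p)).erase 1) := by
    intro τ hτ
    have hτ1 : τ ≠ 1 := Finset.ne_of_mem_erase hτ
    obtain ⟨p, hp, hmem⟩ := hcover τ
    apply Finset.mem_biUnion.2
    exact ⟨p, hp, Finset.mem_erase.2 ⟨hτ1, Finset.mem_filter.2 ⟨Finset.mem_univ _, hmem⟩⟩⟩
  have hcard1 : ((Finset.univ : Finset (Equiv.Perm (Fin n))).erase 1).card = n.factorial - 1 := by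
    rw [Finset.card_erase_of_mem (Finset.mem_univ _), Finset.card_univ, Fintype.card_perm,
      Fintype.card_fin]
  have hcard2 : (S.biUnion (fun p => (Finset.univ.filter (· ∈ F p)).erase 1)).card
      ≤ ∑ p ∈ S, ((Finset.univ.filter (· ∈ F p)).card - 1) := by
    refine (Finset.card_biUnion_le).trans ?_
    apply Finset.sum_le_sum
    intro p hp
    have h1 : (1 : Equiv.Perm (Fin n)) ∈ Finset.univ.filter (· ∈ F p) :=
      Finset.mem_filter.2 ⟨Finset.mem_univ _, (F p).one_mem⟩
    rw [Finset.card_erase_of_mem h1]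
  have hmain : n.factorial - 1 ≤ ∑ p ∈ S, ((Finset.univ.filter (· ∈ F p)).card - 1) := by
    rw [← hcard1]
    exact (Finset.card_le_card hsubset).trans hcard2
  -- multiply by n
  have hN : 2 * n ≤ n.factorial := by
    calc 2 * n ≤ (n-1) * n := by
          have : 2 ≤ n - 1 := by omega
          exact Nat.mul_le_mul_right _ this
      _ ≤ n.factorial := by
          have h1 : (n-1) * n ≤ (n-1).factorial * n := Nat.mul_le_mul_right _ (Nat.self_le_factorial _)
          have h2 : (n-1).factorial * n = n.factorial := by
            have : n - 1 + 1 = n := by omega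
            rw [mul_comm, ← this, Nat.factorial_succ, this]
          omega
  have hfac_div : n * (n.factorial / n) = n.factorial := by
    apply Nat.mul_div_cancel'
    exact Nat.dvd_factorial (by omega) (le_refl n)
  have hsum_le : ∑ p ∈ S, ((Finset.univ.filter (· ∈ F p)).card - 1)
      ≤ S.card * (n.factorial / n - 1) := by
    calc ∑ p ∈ S, ((Finset.univ.filter (· ∈ F p)).card - 1)
        ≤ ∑ _p ∈ S, (n.factorial / n - 1) := by
          apply Finset.sum_le_sum
          intro p hp
          have hcF := hcardF p hp
          rw [hfilter p]
          have : Nat.card (F p) ≤ n.factorial / n := by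
            rw [Nat.le_div_iff_mul_le (by omega), mul_comm]
            exact hcF
          omega
      _ = S.card * (n.factorial / n - 1) := by rw [Finset.sum_const, smul_eq_mul]
  -- now S.card ≤ n - 1
  have hq : n.factorial / n ≥ 2 := by
    by_contra hq1
    push_neg at hq1
    have : n * (n.factorial / n) ≤ n * 1 := Nat.mul_le_mul_left _ (by omega)
    omega
  have hfinal : n.factorial - 1 ≤ (n - 1) * (n.factorial / n - 1) := by
    calc n.factorial - 1 ≤ S.card * (n.factorial / n - 1) := le_trans hmain hsum_le
      _ ≤ (n - 1) * (n.factorial / n - 1) := Nat.mul_le_mul_right _ (by omega)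
  -- contradiction: (n-1)*(q-1) < n*q - 1 where q = n!/n ≥ 2
  set q := n.factorial / n with hqdef
  have hexp : (n - 1) * (q - 1) + q + n ≤ n * q + 1 := by
    have h1 : 1 ≤ q := by omega
    have h2 : 1 ≤ n := by omega
    nlinarith [Nat.sub_add_cancel h1, Nat.sub_add_cancel (by omega : 1 ≤ n),
      Nat.sub_le n 1, Nat.sub_le q 1]
  have : n.factorial = n * q := hfac_div.symm
  omega

end Covering
section SmallN

open Equiv

lemma smalln_card (n : ℕ) (h : n ≤ 4) :
    Nat.card {σ : Equiv.Perm (Fin n) // σ * σ = 1 ∧ σ ≠ 1} ≤ 9 := by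
  interval_cases n <;> (rw [Nat.card_eq_fintype_card]; decide)

end SmallN

section MainTheorem

open Equiv Function

theorem regular_cycle (n : ℕ) (α : MulAut (Equiv.Perm (Fin n))) :
    ∃ τ : Equiv.Perm (Fin n), Function.minimalPeriod (⇑α) τ = orderOf α := by
  classical
  suffices h : ∃ τ, ∀ p ∈ (orderOf α).primeFactors, (α ^ (orderOf α / p)) τ ≠ τ by
    obtain ⟨τ, hτ⟩ := h
    exact ⟨τ, minimalPeriod_from_primes α τ hτ⟩
  set m := orderOf α with hm
  have hmpos : 0 < m := orderOf_pos α
  set S := m.primeFactors with hS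
  set F : ℕ → Subgroup (Equiv.Perm (Fin n)) := fun p => fixSubgroup (α ^ (m / p)) with hF
  have hne1 : ∀ p ∈ S, α ^ (m / p) ≠ 1 := by
    intro p hp
    obtain ⟨hprime, hdvd, -⟩ := Nat.mem_primeFactors.1 hp
    intro hcon
    have hdd : m ∣ m / p := orderOf_dvd_of_pow_eq_one hcon
    have h1 : 0 < m / p := Nat.div_pos (Nat.le_of_dvd hmpos hdvd) hprime.pos
    have h2 : m / p < m := Nat.div_lt_self hmpos hprime.one_lt
    have := Nat.le_of_dvd h1 hdd
    omega
  have hproper : ∀ p ∈ S, F p ≠ ⊤ := fun p hp => fixSubgroup_ne_top (hne1 p hp)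
  suffices h : ∃ τ, ∀ p ∈ S, τ ∉ F p by
    obtain ⟨τ, hτ⟩ := h
    exact ⟨τ, fun p hp hcon => hτ p hp ((mem_fixSubgroup_iff _ _).2 hcon)⟩
  by_cases hk : S.card ≤ 2
  · exact exists_avoiding_of_card_le_two F S hproper hk
  push_neg at hk
  by_contra hno
  push_neg at hno
  have hcover : ∀ τ : Equiv.Perm (Fin n), ∃ p ∈ S, τ ∈ F p := by
    intro τ
    obtain ⟨p, hp, hmem⟩ := hno τ
    exact ⟨p, hp, hmem⟩
  have hSprime : ∀ p ∈ S, Nat.Prime p := fun p hp => Nat.prime_of_mem_primeFactors hp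
  have hSne : S.Nonempty := Finset.card_pos.1 (by omega)
  have hlow : S.card ^ 2 + 1 ≤ ∑ p ∈ S, p := by
    have := sum_distinct_primes_ge hSprime hSne
    simpa using this
  -- n ≥ 5
  have hn5 : 5 ≤ n := by
    by_contra hn4
    push_neg at hn4
    have hup : ∑ p ∈ S, p ≤ Nat.card {σ : Equiv.Perm (Fin n) // σ * σ = 1 ∧ σ ≠ 1} :=
      sum_primes_le_of_injective (invHom n) (invHom_injective n) α
    have hcard9 := smalln_card n (by omega)
    have h3 : 3 ≤ S.card := hk
    nlinarith
  have hidx : ∀ p ∈ S, n ≤ (F p).index := fun p hp => index_fixSubgroup_ge hn5 (hne1 p hp)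
  have hkn : n ≤ S.card := covering_count hn5 S F hidx hcover
  -- decomposition via psi
  set m1 := orderOf (psiHom (Equiv.Perm (Fin n)) α) with hm1
  have hm1dvd : m1 ∣ m := orderOf_map_dvd _ α
  have hm1pos : 0 < m1 := orderOf_pos _
  have hγker : α ^ m1 ∈ (psiHom (Equiv.Perm (Fin n))).ker := by
    rw [MonoidHom.mem_ker, map_pow, pow_orderOf_eq_one]
  have hordγ : orderOf (α ^ m1) = m / m1 := by
    rw [orderOf_pow' α (by omega : m1 ≠ 0), ← hm, Nat.gcd_eq_right hm1dvd]
  set A := m1.primeFactors.card with hA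
  set B := (m / m1).primeFactors.card with hB
  have hSsub : S ⊆ m1.primeFactors ∪ (m / m1).primeFactors := by
    intro p hp
    obtain ⟨hprime, hdvd, -⟩ := Nat.mem_primeFactors.1 hp
    have hsplit : m1 * (m / m1) = m := Nat.mul_div_cancel' hm1dvd
    have hpd : p ∣ m1 * (m / m1) := by rw [hsplit]; exact hdvd
    rcases (Nat.Prime.dvd_mul hprime).1 hpd with h' | h'
    · exact Finset.mem_union_left _ (Nat.mem_primeFactors.2 ⟨hprime, h', by omega⟩)
    · have hmm1 : m / m1 ≠ 0 := by
        intro h0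
        rw [h0, mul_zero] at hsplit
        omega
      exact Finset.mem_union_right _ (Nat.mem_primeFactors.2 ⟨hprime, h', hmm1⟩)
  have hSAB : S.card ≤ A + B := (Finset.card_le_card hSsub).trans (Finset.card_union_le _ _)
  have hA2 : 2 * A ^ 2 ≤ n := by
    rcases Nat.eq_zero_or_pos A with h0 | hpos
    · rw [h0]
      simpa using by omega
    · have hne : m1.primeFactors.Nonempty := Finset.card_pos.1 hpos
      have hlow1 : A ^ 2 + 1 ≤ ∑ p ∈ m1.primeFactors, p := by
        have := sum_distinct_primes_ge (fun p hp => Nat.prime_of_mem_primeFactors hp) hne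
        simpa using this
      have hup1 : ∑ p ∈ m1.primeFactors, p ≤ n / 2 + 1 := by
        have h1 := sum_primes_orderOf_le_natCard (psiHom (Equiv.Perm (Fin n)) α)
        rw [← hm1] at h1
        exact h1.trans card_involClasses_le
      have hdiv : 2 * (n / 2) ≤ n := by omega
      omega
  have hB2 : B = 0 ∨ 2 * B ^ 2 + 2 ≤ n * (n - 1) := by
    rcases Nat.eq_zero_or_pos B with h0 | hpos
    · exact Or.inl h0
    · right
      have hne : (m / m1).primeFactors.Nonempty := Finset.card_pos.1 hpos
      have hlow1 : B ^ 2 + 1 ≤ ∑ p ∈ (m / m1).primeFactors, p := by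
        have := sum_distinct_primes_ge (fun p hp => Nat.prime_of_mem_primeFactors hp) hne
        simpa using this
      have hup1 : ∑ p ∈ (m / m1).primeFactors, p ≤ n * (n - 1) / 2 := by
        rw [← hordγ]
        have e1 : orderOf (α ^ m1)
            = orderOf (⟨α ^ m1, hγker⟩ : (psiHom (Equiv.Perm (Fin n))).ker) :=
          (Subgroup.orderOf_mk (α ^ m1) hγker).symm
        rw [e1]
        exact (sum_primes_le_of_injective (phiHom n) (phiHom_injective n) _).trans card_swaps_le
      have hdiv : n * (n - 1) / 2 * 2 ≤ n * (n - 1) := Nat.div_mul_le_self _ _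
      omega
  have hle : n ≤ A + B := le_trans hkn hSAB
  rcases hB2 with h0 | hB2
  · rw [h0, Nat.add_zero] at hle
    nlinarith
  · have hsq : (A + B) ^ 2 ≤ 2 * A ^ 2 + 2 * B ^ 2 := by nlinarith [two_mul_le_add_sq A B]
    have hnn : n * (n - 1) + n = n * n := by
      have h1 : n - 1 + 1 = n := by omega
      calc n * (n - 1) + n = n * ((n - 1) + 1) := by rw [Nat.mul_succ]
        _ = n * n := by rw [h1]
    have hcontr : (A + B) ^ 2 + 2 ≤ n * n := by omega
    have hmul : n * n ≤ (A + B) * (A + B) := Nat.mul_le_mul hle hle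
    have hpow : (A + B) ^ 2 = (A + B) * (A + B) := sq (A + B)
    omega

end MainTheorem

section Cayley

open Equiv

/-- Cayley embedding into a symmetric group on `Fin n`. -/
lemma cayley_embedding (G : Type*) [Group G] [Fintype G] :
    ∃ (n : ℕ) (f : G →* Equiv.Perm (Fin n)), Function.Injective f := by
  classical
  refine ⟨Fintype.card G, ?_⟩
  set e : G ≃ Fin (Fintype.card G) := Fintype.equivFin G with he
  refine ⟨{ toFun := fun g => (e.symm.trans (Equiv.mulLeft g)).trans e
            map_one' := by ext x; simp
            map_mul' := by intro g h; ext x; simp [mul_assoc] }, ?_⟩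
  intro g h hgh
  have := congrArg (fun π : Equiv.Perm (Fin (Fintype.card G)) => e.symm (π (e 1))) hgh
  simpa using this

end Cayley

/-- Every symmetric group `S_n` is an RCC-group: every automorphism of `S_n` has a regular
cycle. In particular (via Cayley's theorem), every finite group embeds into a finite
RCC-group. -/
theorem stmt19 :
    (∀ (n : ℕ) (α : MulAut (Equiv.Perm (Fin n))),
      ∃ τ : Equiv.Perm (Fin n), Function.minimalPeriod (⇑α) τ = orderOf α) ∧
    ∀ (G : Type*) [Group G] [Fintype G],
      ∃ (n : ℕ) (f : G →* Equiv.Perm (Fin n)), Function.Injective f := by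
  exact ⟨regular_cycle, fun G _ _ => cayley_embedding G⟩
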